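/- Let A ∈ ℝ^{N×N} be a positive column-stochastic matrix. Then every eigenvalue λ ∈ ℂ of A with λ ≠ 1 satisfies |λ| < 1. -/

import Mathlib

open Finset Matrix

theorem stmt4 (N : ℕ) (hN : 1 ≤ N) (A : Matrix (Fin N) (Fin N) ℝ)
    (hA0 : ∀ i j, 0 < A i j) (hA1 : ∀ j, ∑ i, A i j = 1)
    (lam : ℂ) (hlam : lam ≠ 1)
    (v : Fin N → ℂ) (hv : v ≠ 0)
    (heig : (A.map (fun x : ℝ => (x : ℂ))) *ᵥ v = lam • v) :
    ‖lam‖ < 1 := by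
  -- entrywise eigen equation
  have heig' : ∀ i, ∑ j, (A i j : ℂ) * v j = lam * v i := by
    intro i
    have := congrFun heig i
    simpa [Matrix.mulVec, dotProduct, Matrix.map] using this
  -- sum of v is zero
  have hS : ∑ j, v j = 0 := by
    have h1 : ∑ i, ∑ j, (A i j : ℂ) * v j = lam * ∑ i, v i := by
      simp only [heig']
      rw [Finset.mul_sum]
    rw [Finset.sum_comm] at h1
    have h2 : ∀ j : Fin N, ∑ i, (A i j : ℂ) * v j = v j := by
      intro j
      rw [← Finset.sum_mul]
      have : ∑ i, (A i j : ℂ) = 1 := by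
        rw [← Complex.ofReal_sum, hA1 j, Complex.ofReal_one]
      rw [this, one_mul]
    simp only [h2] at h1
    have h3 : (1 - lam) * ∑ j, v j = 0 := by linear_combination h1
    rcases mul_eq_zero.mp h3 with h | h
    · exact absurd (by linear_combination -h : lam = 1) hlam
    · exact h
  -- a nonzero coordinate
  obtain ⟨j₀, hj₀⟩ := Function.ne_iff.mp hv
  simp only [Pi.zero_apply] at hj₀
  -- not all coordinates lie on a common ray
  have hray : ¬ ∀ j, SameRay ℝ (v j₀) (v j) := by
    intro hall
    have hr : ∀ j, ∃ r : ℝ, 0 ≤ r ∧ r • v j₀ = v j :=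
      fun j => (hall j).exists_nonneg_left hj₀
    choose r hr0 hr1 using hr
    have hsum : (∑ j, r j) • v j₀ = 0 := by
      rw [Finset.sum_smul]
      simpa [hr1] using hS
    have hrs : ∑ j, r j = 0 := by
      rcases smul_eq_zero.mp hsum with h | h
      · exact h
      · exact absurd h hj₀
    have hr0' : r j₀ = 0 :=
      (Finset.sum_eq_zero_iff_of_nonneg (fun j _ => hr0 j)).mp hrs j₀ (Finset.mem_univ _)
    apply hj₀
    rw [← hr1 j₀, hr0', zero_smul]
  push_neg at hray
  obtain ⟨k, hk⟩ := hray
  have hkj : k ≠ j₀ := by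
    intro h; subst h; exact hk (SameRay.refl _)
  -- strict triangle inequality at row j₀
  set T : ℝ := ∑ i, ‖v i‖ with hT
  have hTpos : 0 < T := by
    apply Finset.sum_pos' (fun i _ => norm_nonneg _)
    exact ⟨j₀, Finset.mem_univ _, norm_pos_iff.mpr hj₀⟩
  -- per-row bound (non-strict)
  have hrow : ∀ i, ‖lam * v i‖ ≤ ∑ j, A i j * ‖v j‖ := by
    intro i
    rw [← heig' i]
    calc ‖∑ j, (A i j : ℂ) * v j‖ ≤ ∑ j, ‖(A i j : ℂ) * v j‖ := norm_sum_le _ _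
      _ = ∑ j, A i j * ‖v j‖ := by
          refine Finset.sum_congr rfl fun j _ => ?_
          rw [norm_mul, Complex.norm_real, Real.norm_eq_abs, abs_of_pos (hA0 i j)]
  -- strict bound at row j₀
  have hstrict : ‖lam * v j₀‖ < ∑ j, A j₀ j * ‖v j‖ := by
    rw [← heig' j₀]
    set z : Fin N → ℂ := fun j => (A j₀ j : ℂ) * v j with hz
    have hnot : ¬ SameRay ℝ (z j₀) (z k) := by
      intro hsr
      apply hk
      have ha := hA0 j₀ j₀
      have hb := hA0 j₀ k
      have hz' : ∀ j, z j = (A j₀ j : ℝ) • v j := fun j => by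
        rw [hz]; simp [Complex.real_smul]
      rw [hz' j₀, hz' k] at hsr
      have e : ∀ (c : ℝ) (x : ℂ), c ≠ 0 → c⁻¹ • c • x = x := fun c x hc => by
        rw [smul_smul, inv_mul_cancel₀ hc, one_smul]
      have h2 := (hsr.pos_smul_left (inv_pos.mpr ha)).pos_smul_right (inv_pos.mpr hb)
      rwa [e _ _ ha.ne', e _ _ hb.ne'] at h2
    have hlt : ‖z j₀ + z k‖ < ‖z j₀‖ + ‖z k‖ := not_sameRay_iff_norm_add_lt.mp hnot
    have hsplit : ∑ j, z j = (z j₀ + z k) + ∑ j ∈ univ \ {j₀, k}, z j := by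
      rw [← Finset.sum_sdiff (Finset.subset_univ {j₀, k})]
      rw [Finset.sum_pair (Ne.symm hkj)]
      ring
    have habs : ∀ j, ‖z j‖ = A j₀ j * ‖v j‖ := by
      intro j
      rw [hz, norm_mul, Complex.norm_real, Real.norm_eq_abs, abs_of_pos (hA0 j₀ j)]
    calc ‖∑ j, z j‖ ≤ ‖z j₀ + z k‖ + ‖∑ j ∈ univ \ {j₀, k}, z j‖ := by
          rw [hsplit]; exact norm_add_le _ _
      _ ≤ ‖z j₀ + z k‖ + ∑ j ∈ univ \ {j₀, k}, ‖z j‖ := by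
          gcongr; exact norm_sum_le _ _
      _ < (‖z j₀‖ + ‖z k‖) + ∑ j ∈ univ \ {j₀, k}, ‖z j‖ := by gcongr
      _ = ∑ j, ‖z j‖ := by
          rw [← Finset.sum_sdiff (Finset.subset_univ {j₀, k}),
            Finset.sum_pair (Ne.symm hkj)]
          ring
      _ = ∑ j, A j₀ j * ‖v j‖ := Finset.sum_congr rfl fun j _ => habs j
  -- sum up
  have hmain : ‖lam‖ * T < T := by
    have h1 : ∑ i, ‖lam * v i‖ < ∑ i, ∑ j, A i j * ‖v j‖ := by
      apply Finset.sum_lt_sum (fun i _ => hrow i) ⟨j₀, Finset.mem_univ _, hstrict⟩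
    have h2 : ∑ i, ∑ j, A i j * ‖v j‖ = T := by
      rw [Finset.sum_comm]
      refine Finset.sum_congr rfl fun j _ => ?_
      rw [← Finset.sum_mul, hA1 j, one_mul]
    have h3 : ∑ i, ‖lam * v i‖ = ‖lam‖ * T := by
      rw [hT, Finset.mul_sum]
      exact Finset.sum_congr rfl fun i _ => norm_mul _ _
    rw [h3, h2] at h1
    exact h1
  have : ‖lam‖ < 1 := by
    by_contra h
    push_neg at h
    exact absurd hmain (not_lt.mpr (le_mul_of_one_le_left hTpos.le h))
  exact this
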